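/- Flipping condition (non-flip): in the discrete auto rate-tuning model, suppose R(i) > 1 at time step i. Then the ratio does not flip in the next step, i.e. R(i+1) > 1, if and only if the learning rate satisfies λ(i) < κ(i). -/
import Mathlib


/-- Flipping condition (non-flip): if `R i > 1`, then `R (i+1) > 1` iff the
learning rate is below the flipping ratio. -/
theorem elr_ratio_no_flip_iff
    (cl ck : ℝ) (hcl : 0 < cl) (hck : 0 < ck)
    (lam : ℕ → ℝ) (hlam : ∀ i, 0 < lam i)
    (sl sk : ℕ → ℝ) (hsl0 : 0 < sl 0) (hsk0 : 0 < sk 0)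
    (hsl : ∀ i, sl (i + 1) = sl i + (lam i) ^ 2 * cl ^ 2 / sl i)
    (hsk : ∀ i, sk (i + 1) = sk i + (lam i) ^ 2 * ck ^ 2 / sk i)
    (R : ℕ → ℝ) (hR : ∀ i, R i = cl * sk i / (ck * sl i))
    (kap : ℕ → ℝ)
    (hkap : ∀ i, kap i = Real.sqrt (sl i) * Real.sqrt (sk i) / Real.sqrt (cl * ck))
    (i : ℕ) (hRi : 1 < R i) :
    1 < R (i + 1) ↔ lam i < kap i := by
  have hslp : ∀ n, 0 < sl n := by
    intro n
    induction n with
    | zero => exact hsl0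
    | succ n ih => rw [hsl]; positivity
  have hskp : ∀ n, 0 < sk n := by
    intro n
    induction n with
    | zero => exact hsk0
    | succ n ih => rw [hsk]; positivity
  have hA : ck * sl i < cl * sk i := by
    rw [hR, one_lt_div (mul_pos hck (hslp i))] at hRi
    exact hRi
  have hid : cl * sk (i + 1) - ck * sl (i + 1)
      = (cl * sk i - ck * sl i) * (sl i * sk i - lam i ^ 2 * (cl * ck))
        / (sl i * sk i) := by
    rw [hsl, hsk]
    field_simp [(hslp i).ne', (hskp i).ne']
    ring
  have h1 : (1 < R (i + 1)) ↔ lam i ^ 2 * (cl * ck) < sl i * sk i := by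
    rw [hR, one_lt_div (mul_pos hck (hslp (i+1))), ← sub_pos, hid]
    rw [div_pos_iff]
    constructor
    · rintro (⟨h, _⟩ | ⟨h, hneg⟩)
      · nlinarith
      · nlinarith [mul_pos (hslp i) (hskp i)]
    · intro h
      left
      exact ⟨by nlinarith, mul_pos (hslp i) (hskp i)⟩
  have h2 : (lam i < kap i) ↔ lam i ^ 2 * (cl * ck) < sl i * sk i := by
    rw [hkap, ← Real.sqrt_mul (hslp i).le, ← Real.sqrt_div (mul_pos (hslp i) (hskp i)).le,
      Real.lt_sqrt (hlam i).le, lt_div_iff₀ (mul_pos hcl hck)]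
  rw [h1, h2]
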